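/- There exists an additive function f : R → R with f(π) = 0 and f(arccos(1/3)) ≠ 0. -/

import Mathlib

open Real

private noncomputable def theta : ℝ := Real.arccos (1/3)

private lemma cos_theta : Real.cos theta = 1/3 :=
  Real.cos_arccos (by norm_num) (by norm_num)

private lemma key : ∀ n : ℕ, 1 ≤ n → ∃ a : ℤ,
    (a : ℝ) = 3^n * (2 * Real.cos (n * theta)) ∧ (a : ZMod 3) = 2^n := by
  have H : ∀ n : ℕ, (∃ a : ℤ,
      (a : ℝ) = 3^n * (2 * Real.cos (n * theta))) ∧
      (∃ b : ℤ, (b : ℝ) = 3^(n+1) * (2 * Real.cos (((n+1 : ℕ)) * theta)) ∧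
        (b : ZMod 3) = 2^(n+1)) := by
    intro n
    induction n with
    | zero =>
      refine ⟨⟨2, by norm_num⟩, ⟨2, ?_, by decide⟩⟩
      push_cast
      rw [one_mul, cos_theta]
      norm_num
    | succ n ih =>
      obtain ⟨⟨a, ha⟩, ⟨b, hb, hb3⟩⟩ := ih
      refine ⟨⟨b, hb⟩, ⟨2*b - 9*a, ?_, ?_⟩⟩
      · have trig : Real.cos (((n:ℝ)+2) * theta) =
            2 * (1/3) * Real.cos (((n:ℝ)+1) * theta) - Real.cos ((n:ℝ) * theta) := by
          have h1 := Real.cos_add (((n:ℝ)+1) * theta) theta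
          have h2 := Real.cos_sub (((n:ℝ)+1) * theta) theta
          have e1 : ((n:ℝ)+1) * theta + theta = ((n:ℝ)+2) * theta := by ring
          have e2 : ((n:ℝ)+1) * theta - theta = (n:ℝ) * theta := by ring
          rw [e1] at h1; rw [e2] at h2
          rw [h1, h2, cos_theta]; ring
        push_cast
        push_cast at ha hb
        rw [show ((n:ℝ)+1+1) = ((n:ℝ)+2) by ring, trig]
        linear_combination 2 * hb - 9 * ha
      · push_cast
        rw [hb3, show (9 : ZMod 3) = 0 from by decide]
        ring
  intro n hn
  obtain ⟨m, rfl⟩ : ∃ m, n = m + 1 := ⟨n - 1, by omega⟩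
  obtain ⟨b, hb, hb3⟩ := (H m).2
  exact ⟨b, hb, hb3⟩

private lemma indep : LinearIndependent ℚ ![Real.pi, theta] := by
  rw [LinearIndependent.pair_iff]
  intro s t hst
  by_cases ht : t = 0
  · subst ht
    simp only [zero_smul, add_zero] at hst
    have : (s : ℝ) * Real.pi = 0 := by
      simpa [Rat.smul_def] using hst
    have hs : (s : ℝ) = 0 := by
      rcases mul_eq_zero.1 this with h | h
      · exact h
      · exact absurd h Real.pi_ne_zero
    exact ⟨by exact_mod_cast hs, rfl⟩
  · exfalso
    have htR : (t : ℝ) ≠ 0 := by exact_mod_cast ht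
    set r : ℚ := -s / t with hr
    have h0 : (s:ℝ) * Real.pi + (t:ℝ) * theta = 0 := by
      simpa [Rat.smul_def] using hst
    have hθ : theta = (r : ℝ) * Real.pi := by
      have hrc : (r:ℝ) = -(s:ℝ)/(t:ℝ) := by rw [hr]; push_cast; ring
      rw [hrc]
      field_simp
      linarith [h0]
    have hdR : ((r.den : ℝ)) ≠ 0 := Nat.cast_ne_zero.mpr r.den_pos.ne'
    have hqθ : (r.den : ℝ) * theta = (r.num : ℝ) * Real.pi := by
      rw [hθ, Rat.cast_def]
      field_simp
    obtain ⟨a, ha, ha3⟩ := key r.den r.den_pos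
    have habs : |Real.cos ((r.den : ℝ) * theta)| = 1 := by
      rw [hqθ]; exact Real.abs_cos_int_mul_pi r.num
    have hsq : Real.cos ((r.den : ℝ) * theta)^2 = 1 := by
      rw [← sq_abs, habs]; norm_num
    have ha2 : ((a : ℝ))^2 = ((3:ℝ)^(r.den))^2 * 4 := by
      rw [ha]
      linear_combination ((3:ℝ)^(r.den))^2 * 4 * hsq
    have ha2' : (a^2 : ℤ) = (3^(r.den))^2 * 4 := by exact_mod_cast ha2
    have hz : ((a : ZMod 3))^2 = 0 := by
      have hcast : ((a^2 : ℤ) : ZMod 3) = (((3^(r.den))^2 * 4 : ℤ) : ZMod 3) := by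
        rw [ha2']
      push_cast at hcast
      rw [hcast, show (3 : ZMod 3) = 0 from by decide,
        zero_pow r.den_pos.ne', zero_pow (by norm_num), zero_mul]
    rw [ha3, ← pow_mul] at hz
    exact pow_ne_zero _ (by decide : (2 : ZMod 3) ≠ 0) hz

theorem exists_kagan_function_nonzero_at_arccos_third :
    ∃ f : ℝ → ℝ, (∀ a b : ℝ, f (a + b) = f a + f b) ∧
      f Real.pi = 0 ∧ f (Real.arccos (1/3)) ≠ 0 := by
  have hind : LinearIndepOn ℚ id (Set.range ![Real.pi, theta]) :=
    (linearIndepOn_id_range_iff indep.injective).mpr indep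
  have hsub := hind.subset_extend (Set.subset_univ _)
  have hπmem : Real.pi ∈ hind.extend (Set.subset_univ _) := hsub ⟨0, rfl⟩
  have hθmem : theta ∈ hind.extend (Set.subset_univ _) := hsub ⟨1, rfl⟩
  have hne : Real.pi ≠ theta := by
    intro h
    have := cos_theta
    rw [← h, Real.cos_pi] at this
    norm_num at this
  set B := Module.Basis.extend hind with hBdef
  set i : hind.extend (Set.subset_univ _) := ⟨Real.pi, hπmem⟩ with hi
  set j : hind.extend (Set.subset_univ _) := ⟨theta, hθmem⟩ with hj
  refine ⟨fun x => ((B.coord j x : ℚ) : ℝ), ?_, ?_, ?_⟩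
  · intro a b; push_cast [map_add]; ring
  · show ((B.coord j Real.pi : ℚ) : ℝ) = 0
    have h1 : B.coord j Real.pi = B.coord j (B i) :=
      congrArg _ (Module.Basis.extend_apply_self hind i).symm
    rw [h1]
    simp only [Module.Basis.coord_apply, Module.Basis.repr_self_apply]
    rw [if_neg (fun h => hne (congrArg Subtype.val h))]
    norm_num
  · show ((B.coord j (Real.arccos (1/3)) : ℚ) : ℝ) ≠ 0
    have h1 : B.coord j (Real.arccos (1/3)) = B.coord j (B j) :=
      congrArg _ (Module.Basis.extend_apply_self hind j).symm
    rw [h1]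
    simp [Module.Basis.coord_apply, Module.Basis.repr_self_apply]
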